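/- For every PB election there exists a feasible outcome W that satisfies full justified representation: for every weakly (β,T)-cohesive group of voters S there exists a voter i ∈ S with u_i(W) ≥ β. -/

import Mathlib

open Finset

section PBDefs

variable {V C : Type*} [Fintype V] [DecidableEq V] [Fintype C] [DecidableEq C]

/-- Total cost (as a real number) of a set of candidates. -/
def costOf (cost : C → ℚ) (T : Finset C) : ℝ := ∑ c ∈ T, (cost c : ℝ)

/-- Total (additive) utility of voter `i` for a set of candidates. -/
def util (u : V → C → ℝ) (i : V) (T : Finset C) : ℝ := ∑ c ∈ T, u i c

/-- A set of candidates is feasible if its total cost is within the budget of 1. -/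
def feasible (cost : C → ℚ) (W : Finset C) : Prop := costOf cost W ≤ 1

/-- The validity conditions of a PB election: positive costs, utilities in `[0,1]`,
and every candidate is assigned positive utility by some voter. -/
def validPB (cost : C → ℚ) (u : V → C → ℝ) : Prop :=
  (∀ c, 0 < cost c) ∧ (∀ i c, 0 ≤ u i c ∧ u i c ≤ 1) ∧ (∀ c, ∃ i, 0 < u i c)

/-- Extended justified representation, up to one project: for every (α,T)-cohesive
(nonempty) group `S` of voters, some voter `i ∈ S` gets utility at least `∑ c ∈ T, α c`,
or some voter `i ∈ S` would exceed this utility after adding one more candidate. -/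
def EJRupToOne (cost : C → ℚ) (u : V → C → ℝ) (W : Finset C) : Prop :=
  ∀ (α : C → ℝ) (S : Finset V) (T : Finset C),
    (∀ c, 0 ≤ α c ∧ α c ≤ 1) →
    S.Nonempty →
    costOf cost T * (Fintype.card V : ℝ) ≤ (S.card : ℝ) →
    (∀ i ∈ S, ∀ c ∈ T, α c ≤ u i c) →
    (∃ i ∈ S, (∑ c ∈ T, α c) ≤ util u i W) ∨
      (∃ i ∈ S, ∃ a : C, (∑ c ∈ T, α c) < util u i (insert a W))

/-- Extended justified representation (exact version): for every (α,T)-cohesive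
(nonempty) group `S` of voters, some voter `i ∈ S` gets utility at least `∑ c ∈ T, α c`. -/
def EJRexact (cost : C → ℚ) (u : V → C → ℝ) (W : Finset C) : Prop :=
  ∀ (α : C → ℝ) (S : Finset V) (T : Finset C),
    (∀ c, 0 ≤ α c ∧ α c ≤ 1) →
    S.Nonempty →
    costOf cost T * (Fintype.card V : ℝ) ≤ (S.card : ℝ) →
    (∀ i ∈ S, ∀ c ∈ T, α c ≤ u i c) →
    ∃ i ∈ S, (∑ c ∈ T, α c) ≤ util u i W

/-- A (nonempty) group `S` of voters is weakly (β,T)-cohesive. -/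
def weaklyCohesive (cost : C → ℚ) (u : V → C → ℝ) (β : ℝ) (S : Finset V) (T : Finset C) :
    Prop :=
  S.Nonempty ∧ costOf cost T * (Fintype.card V : ℝ) ≤ (S.card : ℝ) ∧
    ∀ i ∈ S, β ≤ util u i T

/-- Full justified representation. -/
def FJR (cost : C → ℚ) (u : V → C → ℝ) (W : Finset C) : Prop :=
  ∀ (β : ℝ) (S : Finset V) (T : Finset C),
    weaklyCohesive cost u β S T → ∃ i ∈ S, β ≤ util u i W

/-- An outcome is exhaustive if no further candidate fits within the budget. -/
def exhaustive (cost : C → ℚ) (W : Finset C) : Prop :=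
  ∀ c ∉ W, 1 < costOf cost (insert c W)

/-- The core: no nonempty group `S` of voters together with a set `T` of candidates
affordable with `S`'s share of the budget can block the outcome. -/
def inCore (cost : C → ℚ) (u : V → C → ℝ) (W : Finset C) : Prop :=
  ∀ (S : Finset V) (T : Finset C), S.Nonempty →
    costOf cost T * (Fintype.card V : ℝ) ≤ (S.card : ℝ) →
    ∃ i ∈ S, util u i T ≤ util u i W

/-- The multiplicative `a`-approximate core. -/
def inAlphaCore (cost : C → ℚ) (u : V → C → ℝ) (a : ℝ) (W : Finset C) : Prop :=
  ∀ (S : Finset V) (T : Finset C), T.Nonempty →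
    costOf cost T ≤ (S.card : ℝ) / (Fintype.card V : ℝ) →
    ∃ i ∈ S, ∃ c ∈ T, util u i T / a ≤ util u i (insert c W)

/-- The total amount paid so far by voter `i`, given per-candidate payments. -/
def totalPaid (pay : V → C → ℝ) (i : V) : ℝ := ∑ c, pay i c

/-- A candidate `c` is ρ-affordable given the payments made so far. -/
def affordable (cost : C → ℚ) (u : V → C → ℝ) (pay : V → C → ℝ) (ρ : ℝ) (c : C) : Prop :=
  ∑ i, min (1 / (Fintype.card V : ℝ) - totalPaid pay i) (u i c * ρ) = (cost c : ℝ)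

/-- One step of Rule X: add a candidate that is ρ-affordable for the minimum ρ ≥ 0,
and record the corresponding payments. -/
def RuleXStep (cost : C → ℚ) (u : V → C → ℝ) :
    (Finset C × (V → C → ℝ)) → (Finset C × (V → C → ℝ)) → Prop := fun s t =>
  ∃ c ∉ s.1, ∃ ρ : ℝ, 0 ≤ ρ ∧ affordable cost u s.2 ρ c ∧
    (∀ ρ' : ℝ, 0 ≤ ρ' → ∀ c' ∉ s.1, affordable cost u s.2 ρ' c' → ρ ≤ ρ') ∧
    t = (insert c s.1,
      fun i c' => if c' = c then
        min (1 / (Fintype.card V : ℝ) - totalPaid s.2 i) (u i c * ρ) else s.2 i c')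

/-- Rule X terminates when no remaining candidate is ρ-affordable for any ρ ≥ 0. -/
def RuleXTerminal (cost : C → ℚ) (u : V → C → ℝ) (s : Finset C × (V → C → ℝ)) : Prop :=
  ∀ ρ : ℝ, 0 ≤ ρ → ∀ c ∉ s.1, ¬ affordable cost u s.2 ρ c

/-- `W` is the output of some execution of Rule X. -/
def RuleXOutcome (cost : C → ℚ) (u : V → C → ℝ) (W : Finset C) : Prop :=
  ∃ pay : V → C → ℝ,
    Relation.ReflTransGen (RuleXStep cost u) (∅, fun _ _ => 0) (W, pay) ∧
      RuleXTerminal cost u (W, pay)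

/-- One step of the Greedy Cohesive Rule: a state consists of the current outcome,
the active voters and the active candidates.  The rule picks a weakly (β,T)-cohesive
group of active voters with β maximal, breaking ties in favor of smaller `cost T`. -/
def GCRStep (cost : C → ℚ) (u : V → C → ℝ) :
    (Finset C × Finset V × Finset C) → (Finset C × Finset V × Finset C) → Prop := fun s t =>
  ∃ (β : ℝ) (S : Finset V) (T : Finset C),
    0 < β ∧ S ⊆ s.2.1 ∧ T ⊆ s.2.2 ∧ weaklyCohesive cost u β S T ∧
    (∀ (β' : ℝ) (S' : Finset V) (T' : Finset C), 0 < β' → S' ⊆ s.2.1 → T' ⊆ s.2.2 →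
      weaklyCohesive cost u β' S' T' → β' ≤ β) ∧
    (∀ (S' : Finset V) (T' : Finset C), S' ⊆ s.2.1 → T' ⊆ s.2.2 →
      weaklyCohesive cost u β S' T' → costOf cost T ≤ costOf cost T') ∧
    t = (s.1 ∪ T, s.2.1 \ S, s.2.2 \ T)

/-- GCR terminates when no weakly cohesive group of active voters remains. -/
def GCRTerminal (cost : C → ℚ) (u : V → C → ℝ) (s : Finset C × Finset V × Finset C) : Prop :=
  ∀ (β : ℝ) (S : Finset V) (T : Finset C), 0 < β → S ⊆ s.2.1 → T ⊆ s.2.2 →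
    ¬ weaklyCohesive cost u β S T

/-- `W` is the output of some execution of the Greedy Cohesive Rule. -/
def GCROutcome (cost : C → ℚ) (u : V → C → ℝ) (W : Finset C) : Prop :=
  ∃ (AV : Finset V) (AC : Finset C),
    Relation.ReflTransGen (GCRStep cost u) (∅, Finset.univ, Finset.univ) (W, AV, AC) ∧
      GCRTerminal cost u (W, AV, AC)

/-- A price system `(b, p)` (with nonnegative payments) supports the outcome `W`:
conditions (C1)-(C5). -/
def supports (cost : C → ℚ) (u : V → C → ℝ) (b : ℝ) (p : V → C → ℝ) (W : Finset C) : Prop :=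
  1 ≤ b ∧ (∀ i c, 0 ≤ p i c) ∧
  (∀ i c, u i c = 0 → p i c = 0) ∧
  (∀ i, ∑ c, p i c ≤ b / (Fintype.card V : ℝ)) ∧
  (∀ c ∈ W, ∑ i, p i c = (cost c : ℝ)) ∧
  (∀ c ∉ W, ∑ i, p i c = 0) ∧
  (∀ c ∉ W, ∑ i ∈ Finset.univ.filter (fun i => 0 < u i c),
    (b / (Fintype.card V : ℝ) - ∑ c' ∈ W, p i c') ≤ (cost c : ℝ))

/-- An outcome is priceable if some price system supports it. -/
def priceable (cost : C → ℚ) (u : V → C → ℝ) (W : Finset C) : Prop :=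
  ∃ (b : ℝ) (p : V → C → ℝ), supports cost u b p W

/-- EJR for approval-based elections: every `T`-cohesive group contains a voter
with at least `|T|` approved candidates in `W`. -/
def approvalEJR (cost : C → ℚ) (A : V → Finset C) (W : Finset C) : Prop :=
  ∀ (S : Finset V) (T : Finset C), S.Nonempty →
    costOf cost T * (Fintype.card V : ℝ) ≤ (S.card : ℝ) →
    (∀ i ∈ S, T ⊆ A i) →
    ∃ i ∈ S, T.card ≤ (A i ∩ W).card

/-- The `t`-th harmonic number. -/
noncomputable def harm (t : ℕ) : ℝ := ∑ j ∈ Finset.range t, (1 : ℝ) / (j + 1)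

/-- The PAV score of an outcome. -/
noncomputable def PAVscore (A : V → Finset C) (W : Finset C) : ℝ := ∑ i, harm ((A i ∩ W).card)

end PBDefs

section AuxFJR

variable {V C : Type*} [Fintype V] [DecidableEq V] [Fintype C] [DecidableEq C]

lemma costOf_nonneg' (cost : C → ℚ) (h : ∀ c, 0 < cost c) (T : Finset C) :
    0 ≤ costOf cost T :=
  Finset.sum_nonneg fun c _ => by exact_mod_cast (h c).le

lemma util_nonneg' (u : V → C → ℝ) (hu : ∀ i c, 0 ≤ u i c) (i : V) (T : Finset C) :
    0 ≤ util u i T :=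
  Finset.sum_nonneg fun c _ => hu i c

lemma util_mono' (u : V → C → ℝ) (hu : ∀ i c, 0 ≤ u i c) (i : V) {T W : Finset C}
    (h : T ⊆ W) : util u i T ≤ util u i W :=
  Finset.sum_le_sum_of_subset_of_nonneg h (fun c _ _ => hu i c)

lemma exists_W_aux (cost : C → ℚ) (u : V → C → ℝ) (hvalid : validPB cost u) :
    ∀ A : Finset V, ∃ W : Finset C,
      costOf cost W * (Fintype.card V : ℝ) ≤ (A.card : ℝ) ∧
      ∀ (β : ℝ) (S : Finset V) (T : Finset C), 0 < β → S ⊆ A →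
        weaklyCohesive cost u β S T → ∃ i ∈ S, β ≤ util u i W := by
  classical
  intro A
  induction A using Finset.strongInduction with
  | _ A ih =>
  by_cases hcoh : ∃ (β : ℝ) (S : Finset V) (T : Finset C),
      0 < β ∧ S ⊆ A ∧ weaklyCohesive cost u β S T
  · obtain ⟨β0, S0, T0, hβ0, hS0A, hcoh0⟩ := hcoh
    set n : ℝ := (Fintype.card V : ℝ) with hn
    set P : Finset (Finset V × Finset C) :=
      (A.powerset ×ˢ (Finset.univ : Finset C).powerset).filter
        (fun p => p.1.Nonempty ∧ costOf cost p.2 * n ≤ (p.1.card : ℝ) ∧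
          ∀ i ∈ p.1, 0 < util u i p.2) with hP
    have hmemP : ∀ (β : ℝ) (S : Finset V) (T : Finset C), 0 < β → S ⊆ A →
        weaklyCohesive cost u β S T → (S, T) ∈ P := by
      intro β S T hβ hSA hc
      simp only [hP, Finset.mem_filter, Finset.mem_product, Finset.mem_powerset]
      exact ⟨⟨hSA, Finset.subset_univ _⟩, hc.1, hc.2.1,
        fun i hi => lt_of_lt_of_le hβ (hc.2.2 i hi)⟩
    have hPne : P.Nonempty := ⟨(S0, T0), hmemP β0 S0 T0 hβ0 hS0A hcoh0⟩
    set f : Finset V × Finset C → ℝ := fun p =>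
      if h : p.1.Nonempty then p.1.inf' h (fun i => util u i p.2) else 0 with hf
    obtain ⟨pstar, hpstar, hmax⟩ := P.exists_max_image f hPne
    simp only [hP, Finset.mem_filter, Finset.mem_product, Finset.mem_powerset] at hpstar
    obtain ⟨⟨hSstarA, -⟩, hSstarne, hcoststar, hutilstar⟩ := hpstar
    have hfstar : f pstar = pstar.1.inf' hSstarne (fun i => util u i pstar.2) :=
      dif_pos hSstarne
    have hsub : A \ pstar.1 ⊂ A := Finset.sdiff_ssubset hSstarA hSstarne
    obtain ⟨W', hW'cost, hW'fjr⟩ := ih _ hsub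
    refine ⟨W' ∪ pstar.2, ?_, ?_⟩
    · have hadd : costOf cost (W' ∪ pstar.2) ≤ costOf cost W' + costOf cost pstar.2 := by
        have := Finset.sum_union_inter (s₁ := W') (s₂ := pstar.2)
          (f := fun c => ((cost c : ℝ)))
        have hinter : 0 ≤ costOf cost (W' ∩ pstar.2) :=
          costOf_nonneg' cost hvalid.1 _
        simp only [costOf] at *
        linarith
      have hncast : ((A \ pstar.1).card : ℝ) + (pstar.1.card : ℝ) = (A.card : ℝ) := by
        rw [← Nat.cast_add]
        exact_mod_cast congrArg Nat.cast (Finset.card_sdiff_add_card_eq_card hSstarA)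
      have hnn : (0:ℝ) ≤ n := Nat.cast_nonneg _
      nlinarith [mul_le_mul_of_nonneg_right hadd hnn]
    · intro β S T hβ hSA hc
      by_cases hint : (S ∩ pstar.1).Nonempty
      · obtain ⟨i, hi⟩ := hint
        rw [Finset.mem_inter] at hi
        refine ⟨i, hi.1, ?_⟩
        have h1 : β ≤ f (S, T) := by
          have hfeq : f (S, T) = S.inf' hc.1 (fun j => util u j T) := dif_pos hc.1
          rw [hfeq]
          exact Finset.le_inf' hc.1 _ (fun j hj => hc.2.2 j hj)
        have h2 : f (S, T) ≤ f pstar := hmax (S, T) (hmemP β S T hβ hSA hc)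
        have h3 : f pstar ≤ util u i pstar.2 := by
          rw [hfstar]
          exact Finset.inf'_le _ hi.2
        have h4 : util u i pstar.2 ≤ util u i (W' ∪ pstar.2) :=
          util_mono' u (fun i c => (hvalid.2.1 i c).1) i (Finset.subset_union_right)
        linarith
      · have hSsub : S ⊆ A \ pstar.1 := by
          intro j hj
          rw [Finset.mem_sdiff]
          exact ⟨hSA hj, fun hjs => hint ⟨j, Finset.mem_inter.2 ⟨hj, hjs⟩⟩⟩
        obtain ⟨i, hi, hui⟩ := hW'fjr β S T hβ hSsub hc
        exact ⟨i, hi, le_trans hui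
          (util_mono' u (fun i c => (hvalid.2.1 i c).1) i Finset.subset_union_left)⟩
  · refine ⟨∅, ?_, ?_⟩
    · simp [costOf]
    · intro β S T hβ hSA hc
      exact absurd ⟨β, S, T, hβ, hSA, hc⟩ hcoh

end AuxFJR

/-- For every PB election there exists a feasible outcome that satisfies
full justified representation. -/
theorem exists_feasible_FJR
    {V C : Type*} [Fintype V] [DecidableEq V] [Fintype C] [DecidableEq C]
    (cost : C → ℚ) (u : V → C → ℝ) (hvalid : validPB cost u) :
    ∃ W : Finset C, feasible cost W ∧ FJR cost u W := by
  obtain ⟨W, hWcost, hWfjr⟩ := exists_W_aux cost u hvalid (Finset.univ : Finset V)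
  rcases Nat.eq_zero_or_pos (Fintype.card V) with hn | hn
  · refine ⟨∅, by simp [feasible, costOf], ?_⟩
    intro β S T hc
    have : IsEmpty V := Fintype.card_eq_zero_iff.mp hn
    obtain ⟨i, -⟩ := hc.1
    exact (this.false i).elim
  · refine ⟨W, ?_, ?_⟩
    · have hcard : ((Finset.univ : Finset V).card : ℝ) = (Fintype.card V : ℝ) := by
        simp
      have hnpos : (0:ℝ) < (Fintype.card V : ℝ) := by exact_mod_cast hn
      rw [hcard] at hWcost
      have := le_of_mul_le_mul_right (by linarith : costOf cost W * (Fintype.card V : ℝ) ≤ 1 * (Fintype.card V : ℝ)) hnpos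
      exact this
    · intro β S T hc
      rcases le_or_gt β 0 with hβ | hβ
      · obtain ⟨i, hi⟩ := hc.1
        exact ⟨i, hi, le_trans hβ (util_nonneg' u (fun i c => (hvalid.2.1 i c).1) i W)⟩
      · exact hWfjr β S T hβ (Finset.subset_univ S) hc
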